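/- Let β ∈ ℝ and α ∈ [0,1]. Then there exists C > 0 such that for all ε ∈ (0,1] and all u ∈ H^β, one has ‖D_ε u − ∂_x u‖_{β−1−α} ≤ C ε^α ‖u‖_β, where ∂_x is the derivative acting as the Fourier multiplier (∂_x u)_k = ik u_k. -/

import Mathlib

open MeasureTheory
open scoped BigOperators

/-- The squared Sobolev norm `‖u‖_σ² = Σ_{k∈ℤ} (1+k²)^σ |u_k|²` on Fourier coefficients. -/
noncomputable def sobNormSq (σ : ℝ) (a : ℤ → ℂ) : ℝ :=
  ∑' k : ℤ, (1 + (k : ℝ) ^ 2) ^ σ * ‖a k‖ ^ 2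

/-- The Fourier transform `μ̂(ξ) = ∫ e^{iξy} μ(dy)` of the signed measure `μ = μp - μn`. -/
noncomputable def muHat (μp μn : Measure ℝ) (ξ : ℝ) : ℂ :=
  (∫ y, Complex.exp (Complex.I * ξ * y) ∂μp) - ∫ y, Complex.exp (Complex.I * ξ * y) ∂μn

/- ### Auxiliary lemmas -/

lemma aux_expDeriv (t : ℝ) : HasDerivAt (fun s : ℝ => Complex.exp (Complex.I * s))
    (Complex.exp (Complex.I * t) * Complex.I) t := by
  have h1 : HasDerivAt (fun s : ℝ => (Complex.I * s : ℂ)) Complex.I t := by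
    simpa using (Complex.ofRealCLM.hasDerivAt (x := t)).const_mul Complex.I
  simpa using h1.cexp

lemma aux_exp_sub_one_le {x : ℝ} (hx : 0 ≤ x) : ‖Complex.exp (Complex.I * x) - 1‖ ≤ x := by
  have := norm_image_sub_le_of_norm_deriv_le_segment'
    (f := fun s : ℝ => Complex.exp (Complex.I * s))
    (f' := fun s : ℝ => Complex.exp (Complex.I * s) * Complex.I) (a := 0) (b := x) (C := 1)
    (fun s hs => (aux_expDeriv s).hasDerivWithinAt)
    (fun s hs => by
      rw [norm_mul]
      simp [Complex.norm_exp])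
    x (by constructor <;> simp [hx])
  simpa using this

lemma aux_exp_taylor_nonneg {x : ℝ} (hx : 0 ≤ x) :
    ‖Complex.exp (Complex.I * x) - 1 - Complex.I * x‖ ≤ x ^ 2 := by
  have := norm_image_sub_le_of_norm_deriv_le_segment'
    (f := fun s : ℝ => Complex.exp (Complex.I * s) - 1 - Complex.I * s)
    (f' := fun s : ℝ => Complex.exp (Complex.I * s) * Complex.I - Complex.I)
    (a := 0) (b := x) (C := x)
    (fun s hs => by
      have h1 : HasDerivAt (fun s : ℝ => (Complex.I * s : ℂ)) Complex.I s := by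
        simpa using (Complex.ofRealCLM.hasDerivAt (x := s)).const_mul Complex.I
      exact (((aux_expDeriv s).sub_const 1).sub h1).hasDerivWithinAt)
    (fun s hs => by
      have : Complex.exp (Complex.I * s) * Complex.I - Complex.I
          = (Complex.exp (Complex.I * s) - 1) * Complex.I := by ring
      show ‖Complex.exp (Complex.I * s) * Complex.I - Complex.I‖ ≤ x
      rw [this, norm_mul]
      have h2 : ‖Complex.exp (Complex.I * (s : ℝ)) - 1‖ ≤ s := aux_exp_sub_one_le hs.1
      simpa using h2.trans (le_of_lt hs.2))
    x (by constructor <;> simp [hx])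
  have e : (x - 0) = x := by ring
  calc ‖Complex.exp (Complex.I * x) - 1 - Complex.I * x‖ ≤ x * (x - 0) := by simpa using this
  _ = x ^ 2 := by ring

lemma aux_exp_taylor (x : ℝ) :
    ‖Complex.exp (Complex.I * x) - 1 - Complex.I * x‖ ≤ x ^ 2 := by
  rcases le_or_gt 0 x with h | h
  · exact aux_exp_taylor_nonneg h
  · have h' : 0 ≤ -x := by linarith
    have key := aux_exp_taylor_nonneg h'
    have hconj : Complex.exp (Complex.I * x) - 1 - Complex.I * x
        = (starRingEnd ℂ) (Complex.exp (Complex.I * (-x : ℝ)) - 1 - Complex.I * (-x : ℝ)) := by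
      simp only [map_sub, map_mul, map_one, ← Complex.exp_conj, Complex.conj_I,
        Complex.conj_ofReal, Complex.ofReal_neg, map_neg]
      ring_nf
    rw [hconj, RCLike.norm_conj]
    calc _ ≤ (-x)^2 := key
    _ = x ^ 2 := by ring

section Meas
variable (μ : Measure ℝ) [IsFiniteMeasure μ]

lemma aux_int_sq (h4 : Integrable (fun y : ℝ => |y| ^ 4) μ) : Integrable (fun y : ℝ => y ^ 2) μ := by
  refine Integrable.mono' ((integrable_const 1).add h4) ?_ ?_
  · exact (continuous_pow 2).aestronglyMeasurable
  · filter_upwards with y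
    show ‖y ^ 2‖ ≤ 1 + |y| ^ 4
    have h1 : |y|^4 = y^4 := by rw [← abs_pow]; exact abs_of_nonneg (by positivity)
    have h2 : ‖y^2‖ = y^2 := by simp [abs_of_nonneg (sq_nonneg y)]
    rw [h1, h2]
    nlinarith [sq_nonneg (y^2 - 1)]

lemma aux_int_id (h4 : Integrable (fun y : ℝ => |y| ^ 4) μ) : Integrable (fun y : ℝ => y) μ := by
  refine Integrable.mono' ((integrable_const 1).add h4) ?_ ?_
  · exact continuous_id.aestronglyMeasurable
  · filter_upwards with y
    show ‖y‖ ≤ 1 + |y| ^ 4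
    rw [Real.norm_eq_abs]
    nlinarith [abs_nonneg y, sq_nonneg (|y| - 1), sq_nonneg (|y|^2 - 1), sq_abs y]

lemma aux_int_exp (ξ : ℝ) : Integrable (fun y : ℝ => Complex.exp (Complex.I * ξ * y)) μ := by
  refine Integrable.mono' (integrable_const 1) ?_ ?_
  · exact (Complex.continuous_exp.comp (by fun_prop)).aestronglyMeasurable
  · filter_upwards with y
    simp [Complex.norm_exp]

lemma aux_int_rem (h4 : Integrable (fun y : ℝ => |y| ^ 4) μ) (ξ : ℝ) :
    Integrable (fun y : ℝ => Complex.exp (Complex.I * ξ * y) - 1 - Complex.I * ξ * y) μ := by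
  refine ((aux_int_exp μ ξ).sub (integrable_const 1)).sub ?_
  have := ((aux_int_id μ h4).ofReal (𝕜 := ℂ)).const_mul (Complex.I * ξ)
  simpa [mul_assoc] using this

lemma aux_int_rem_eq (h4 : Integrable (fun y : ℝ => |y| ^ 4) μ) (ξ : ℝ) :
    (∫ y, (Complex.exp (Complex.I * ξ * y) - 1 - Complex.I * ξ * y) ∂μ)
      = (∫ y, Complex.exp (Complex.I * ξ * y) ∂μ) - ((μ Set.univ).toReal : ℂ)
        - Complex.I * ξ * ((∫ y, y ∂μ : ℝ) : ℂ) := by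
  have h1 : Integrable (fun y : ℝ => Complex.I * ξ * (y : ℂ)) μ := by
    have := ((aux_int_id μ h4).ofReal (𝕜 := ℂ)).const_mul (Complex.I * ξ)
    simpa [mul_assoc] using this
  have e1 := integral_sub (μ := μ) ((aux_int_exp μ ξ).sub (integrable_const 1)) h1
  have e2 := integral_sub (μ := μ) (aux_int_exp μ ξ) (integrable_const (1 : ℂ))
  simp only [Pi.sub_apply] at e1 e2
  rw [show (fun y : ℝ => Complex.exp (Complex.I * ξ * y) - 1 - Complex.I * ξ * y)
      = fun y : ℝ => (Complex.exp (Complex.I * ξ * y) - 1) - Complex.I * ξ * y from rfl,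
    e1, e2, integral_const]
  have h2 : (∫ y, Complex.I * ξ * (y : ℂ) ∂μ) = Complex.I * ξ * ((∫ y, y ∂μ : ℝ) : ℂ) := by
    rw [integral_const_mul]
    congr 1
    exact integral_ofReal
  rw [h2]
  simp [smul_eq_mul]
  rfl

lemma aux_int_rem_norm (h4 : Integrable (fun y : ℝ => |y| ^ 4) μ) (ξ : ℝ) :
    ‖∫ y, (Complex.exp (Complex.I * ξ * y) - 1 - Complex.I * ξ * y) ∂μ‖
      ≤ (∫ y, y ^ 2 ∂μ) * ξ ^ 2 := by
  calc ‖∫ y, (Complex.exp (Complex.I * ξ * y) - 1 - Complex.I * ξ * y) ∂μ‖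
      ≤ ∫ y, ‖Complex.exp (Complex.I * ξ * y) - 1 - Complex.I * ξ * y‖ ∂μ :=
        norm_integral_le_integral_norm _
    _ ≤ ∫ y, ξ ^ 2 * y ^ 2 ∂μ := by
        refine integral_mono ((aux_int_rem μ h4 ξ).norm) ((aux_int_sq μ h4).const_mul _) ?_
        intro y
        show ‖Complex.exp (Complex.I * ξ * y) - 1 - Complex.I * ξ * y‖ ≤ ξ ^ 2 * y ^ 2
        have := aux_exp_taylor (ξ * y)
        have e : Complex.I * (ξ : ℂ) * (y : ℂ) = Complex.I * ((ξ * y : ℝ) : ℂ) := by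
          push_cast; ring
        rw [e]
        calc ‖Complex.exp (Complex.I * ((ξ * y : ℝ) : ℂ)) - 1 - Complex.I * ((ξ * y : ℝ) : ℂ)‖
            ≤ (ξ * y) ^ 2 := this
          _ = ξ ^ 2 * y ^ 2 := by ring
    _ = (∫ y, y ^ 2 ∂μ) * ξ ^ 2 := by
        rw [integral_const_mul]; ring

omit [IsFiniteMeasure μ] in
lemma aux_int_exp_norm (ξ : ℝ) :
    ‖∫ y, Complex.exp (Complex.I * ξ * y) ∂μ‖ ≤ (μ Set.univ).toReal := by
  calc ‖∫ y, Complex.exp (Complex.I * ξ * y) ∂μ‖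
      ≤ ∫ y, ‖Complex.exp (Complex.I * ξ * y)‖ ∂μ := norm_integral_le_integral_norm _
    _ = (μ Set.univ).toReal := by
        simp [Complex.norm_exp, Measure.real]

end Meas

lemma aux_pow_half_bound {r α : ℝ} (hr : 0 ≤ r) (hα0 : 0 ≤ α) :
    r ^ (1 + α) ≤ (1 + r ^ 2) ^ ((1 + α) / 2) := by
  have h1 : r ^ (1 + α) = (r ^ 2) ^ ((1 + α) / 2) := by
    rw [← Real.rpow_natCast r 2, ← Real.rpow_mul hr,
      show (2:ℕ) * ((1 + α) / 2) = 1 + α by push_cast; ring]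
  rw [h1]
  exact Real.rpow_le_rpow (sq_nonneg r) (by nlinarith) (by positivity)

lemma aux_case1 {ε α : ℝ} (hε0 : 0 < ε) (hα0 : 0 ≤ α) (hα1 : α ≤ 1)
    {r : ℝ} (hr : 0 ≤ r) (hk : ε * r ≤ 1) :
    ε * r ^ 2 ≤ ε ^ α * (1 + r ^ 2) ^ ((1 + α) / 2) := by
  rcases eq_or_lt_of_le hr with h0 | h0
  · rw [← h0]
    norm_num
    positivity
  have key : ε * r ^ 2 = ε ^ α * ((ε * r) ^ (1 - α) * r ^ (1 + α)) := by
    rw [Real.mul_rpow hε0.le hr]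
    rw [show ε ^ α * (ε ^ (1 - α) * r ^ (1 - α) * r ^ (1 + α))
        = (ε ^ α * ε ^ (1 - α)) * (r ^ (1 - α) * r ^ (1 + α)) by ring,
      ← Real.rpow_add hε0, ← Real.rpow_add h0]
    norm_num
  rw [key]
  have h2 : (ε * r) ^ (1 - α) * r ^ (1 + α) ≤ 1 * (1 + r ^ 2) ^ ((1 + α) / 2) :=
    mul_le_mul (Real.rpow_le_one (by positivity) hk (by linarith))
      (aux_pow_half_bound hr hα0) (by positivity) zero_le_one
  rw [one_mul] at h2
  exact mul_le_mul_of_nonneg_left h2 (by positivity)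

lemma aux_case2 {ε α : ℝ} (hε0 : 0 < ε) (hα0 : 0 ≤ α)
    {r : ℝ} (hr : 0 ≤ r) (hk : 1 ≤ ε * r) :
    r ≤ ε ^ α * (1 + r ^ 2) ^ ((1 + α) / 2) := by
  have hr0 : 0 < r := by nlinarith
  have key : ε ^ α * r ^ (1 + α) = r * (ε * r) ^ α := by
    rw [Real.mul_rpow hε0.le hr, show (1 : ℝ) + α = α + 1 by ring, Real.rpow_add hr0,
      Real.rpow_one]
    ring
  have h1 : r ≤ ε ^ α * r ^ (1 + α) := by
    rw [key]
    nth_rewrite 1 [← mul_one r]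
    exact mul_le_mul_of_nonneg_left (Real.one_le_rpow hk hα0) hr
  exact h1.trans (mul_le_mul_of_nonneg_left (aux_pow_half_bound hr hα0) (by positivity))

/-- `‖D_ε u - ∂_x u‖_{β-1-α} ≤ C ε^α ‖u‖_β`, where `D_ε` acts as the Fourier multiplier
`ε^{-1} μ̂(εk)` and `∂_x` as the multiplier `ik`. -/
theorem stmt_8 (β α : ℝ) (hα : α ∈ Set.Icc (0 : ℝ) 1)
    (μp μn : Measure ℝ) [IsFiniteMeasure μp] [IsFiniteMeasure μn]
    (hzero : μp Set.univ = μn Set.univ)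
    (hmean : (∫ y, y ∂μp) - ∫ y, y ∂μn = 1)
    (hmom : Integrable (fun y : ℝ => |y| ^ 4) (μp + μn)) :
    ∃ C > 0, ∀ ε ∈ Set.Ioc (0 : ℝ) 1, ∀ u : ℤ → ℂ,
      Summable (fun k : ℤ => (1 + (k : ℝ) ^ 2) ^ β * ‖u k‖ ^ 2) →
      Summable (fun k : ℤ => (1 + (k : ℝ) ^ 2) ^ (β - 1 - α) *
        ‖(((ε⁻¹ : ℝ) : ℂ) * muHat μp μn (ε * k) - Complex.I * k) * u k‖ ^ 2) ∧
      Real.sqrt (sobNormSq (β - 1 - α)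
          (fun k => (((ε⁻¹ : ℝ) : ℂ) * muHat μp μn (ε * k) - Complex.I * k) * u k)) ≤
        C * ε ^ α * Real.sqrt (sobNormSq β u) := by
  obtain ⟨hα0, hα1⟩ := hα
  have h4p : Integrable (fun y : ℝ => |y| ^ 4) μp := (integrable_add_measure.mp hmom).1
  have h4n : Integrable (fun y : ℝ => |y| ^ 4) μn := (integrable_add_measure.mp hmom).2
  set M2 : ℝ := (∫ y, y ^ 2 ∂μp) + ∫ y, y ^ 2 ∂μn with hM2def
  set T : ℝ := (μp Set.univ).toReal + (μn Set.univ).toReal with hTdef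
  have hM2 : 0 ≤ M2 := add_nonneg (integral_nonneg fun y => sq_nonneg y)
    (integral_nonneg fun y => sq_nonneg y)
  have hT : 0 ≤ T := add_nonneg ENNReal.toReal_nonneg ENNReal.toReal_nonneg
  refine ⟨M2 + T + 1, by linarith, ?_⟩
  -- key estimate 1: Taylor remainder
  have key1 : ∀ ξ : ℝ, ‖muHat μp μn ξ - Complex.I * ξ‖ ≤ M2 * ξ ^ 2 := by
    intro ξ
    have hc : ((μp Set.univ).toReal : ℂ) = ((μn Set.univ).toReal : ℂ) := by rw [hzero]
    have ha : ((∫ y, y ∂μp : ℝ) : ℂ) - ((∫ y, y ∂μn : ℝ) : ℂ) = 1 := by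
      rw [← Complex.ofReal_sub, hmean, Complex.ofReal_one]
    have hiden : muHat μp μn ξ - Complex.I * ξ
        = (∫ y, (Complex.exp (Complex.I * ξ * y) - 1 - Complex.I * ξ * y) ∂μp)
          - ∫ y, (Complex.exp (Complex.I * ξ * y) - 1 - Complex.I * ξ * y) ∂μn := by
      rw [aux_int_rem_eq μp h4p ξ, aux_int_rem_eq μn h4n ξ, muHat]
      linear_combination hc + Complex.I * ξ * ha
    rw [hiden]
    calc ‖(∫ y, (Complex.exp (Complex.I * ξ * y) - 1 - Complex.I * ξ * y) ∂μp)
          - ∫ y, (Complex.exp (Complex.I * ξ * y) - 1 - Complex.I * ξ * y) ∂μn‖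
        ≤ ‖∫ y, (Complex.exp (Complex.I * ξ * y) - 1 - Complex.I * ξ * y) ∂μp‖
          + ‖∫ y, (Complex.exp (Complex.I * ξ * y) - 1 - Complex.I * ξ * y) ∂μn‖ :=
          norm_sub_le _ _
      _ ≤ (∫ y, y ^ 2 ∂μp) * ξ ^ 2 + (∫ y, y ^ 2 ∂μn) * ξ ^ 2 :=
          add_le_add (aux_int_rem_norm μp h4p ξ) (aux_int_rem_norm μn h4n ξ)
      _ = M2 * ξ ^ 2 := by rw [hM2def]; ring
  -- key estimate 2: crude bound
  have key2 : ∀ ξ : ℝ, ‖muHat μp μn ξ‖ ≤ T := by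
    intro ξ
    rw [muHat, hTdef]
    exact (norm_sub_le _ _).trans (add_le_add (aux_int_exp_norm μp ξ) (aux_int_exp_norm μn ξ))
  rintro ε ⟨hε0, hε1⟩ u hsum
  -- multiplier bound
  have hmult : ∀ k : ℤ, ‖((ε⁻¹ : ℝ) : ℂ) * muHat μp μn (ε * k) - Complex.I * k‖
      ≤ (M2 + T + 1) * (ε ^ α * (1 + (k : ℝ) ^ 2) ^ ((1 + α) / 2)) := by
    intro k
    set r : ℝ := |(k : ℝ)| with hrdef
    have hr : 0 ≤ r := abs_nonneg _
    have hr2 : r ^ 2 = (k : ℝ) ^ 2 := sq_abs _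
    have hpos : (0:ℝ) < ε ^ α * (1 + (k : ℝ) ^ 2) ^ ((1 + α) / 2) := by positivity
    rcases le_or_gt (ε * r) 1 with hcase | hcase
    · -- Taylor regime
      have hfact : ((ε⁻¹ : ℝ) : ℂ) * muHat μp μn (ε * k) - Complex.I * k
          = ((ε⁻¹ : ℝ) : ℂ) * (muHat μp μn (ε * k) - Complex.I * ((ε * k : ℝ) : ℂ)) := by
        have hε : (ε : ℂ) ≠ 0 := by exact_mod_cast hε0.ne'
        push_cast
        field_simp
      rw [hfact, norm_mul]
      have h1 : ‖((ε⁻¹ : ℝ) : ℂ)‖ = ε⁻¹ := by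
        rw [Complex.norm_real, Real.norm_eq_abs, abs_of_nonneg (inv_nonneg.mpr hε0.le)]
      rw [h1]
      calc ε⁻¹ * ‖muHat μp μn (ε * k) - Complex.I * ((ε * k : ℝ) : ℂ)‖
          ≤ ε⁻¹ * (M2 * (ε * k) ^ 2) := by
            exact mul_le_mul_of_nonneg_left (key1 (ε * k)) (inv_nonneg.mpr hε0.le)
        _ = M2 * (ε * r ^ 2) := by
            rw [hr2, mul_pow, show ε⁻¹ * (M2 * (ε ^ 2 * (k:ℝ) ^ 2))
              = M2 * ((ε⁻¹ * ε) * ε * (k:ℝ) ^ 2) by ring, inv_mul_cancel₀ hε0.ne']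
            ring
        _ ≤ M2 * (ε ^ α * (1 + (k : ℝ) ^ 2) ^ ((1 + α) / 2)) := by
            refine mul_le_mul_of_nonneg_left ?_ hM2
            rw [← hr2]
            exact aux_case1 hε0 hα0 hα1 hr hcase
        _ ≤ (M2 + T + 1) * (ε ^ α * (1 + (k : ℝ) ^ 2) ^ ((1 + α) / 2)) := by
            refine mul_le_mul_of_nonneg_right (by linarith) hpos.le
    · -- crude regime
      have hrk : r ≤ ε ^ α * (1 + (k : ℝ) ^ 2) ^ ((1 + α) / 2) := by
        rw [← hr2]
        exact aux_case2 hε0 hα0 hr hcase.le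
      have hinv : ε⁻¹ ≤ r := by
        rw [inv_le_iff_one_le_mul₀ hε0, mul_comm]
        exact hcase.le
      calc ‖((ε⁻¹ : ℝ) : ℂ) * muHat μp μn (ε * k) - Complex.I * k‖
          ≤ ‖((ε⁻¹ : ℝ) : ℂ) * muHat μp μn (ε * k)‖ + ‖Complex.I * (k : ℂ)‖ := norm_sub_le _ _
        _ ≤ ε⁻¹ * T + r := by
            refine add_le_add ?_ ?_
            · rw [norm_mul]
              have h1 : ‖((ε⁻¹ : ℝ) : ℂ)‖ = ε⁻¹ := by
                rw [Complex.norm_real, Real.norm_eq_abs, abs_of_nonneg (inv_nonneg.mpr hε0.le)]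
              rw [h1]
              exact mul_le_mul_of_nonneg_left (key2 (ε * k)) (inv_nonneg.mpr hε0.le)
            · rw [norm_mul]
              simp [hrdef]
        _ ≤ r * T + r := by
            exact add_le_add (mul_le_mul_of_nonneg_right hinv hT) le_rfl
        _ = (T + 1) * r := by ring
        _ ≤ (T + 1) * (ε ^ α * (1 + (k : ℝ) ^ 2) ^ ((1 + α) / 2)) :=
            mul_le_mul_of_nonneg_left hrk (by linarith)
        _ ≤ (M2 + T + 1) * (ε ^ α * (1 + (k : ℝ) ^ 2) ^ ((1 + α) / 2)) :=
            mul_le_mul_of_nonneg_right (by linarith) hpos.le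
  set C : ℝ := M2 + T + 1 with hCdef
  have hC : 0 < C := by rw [hCdef]; linarith
  -- termwise bound
  have hterm : ∀ k : ℤ, (1 + (k : ℝ) ^ 2) ^ (β - 1 - α) *
      ‖(((ε⁻¹ : ℝ) : ℂ) * muHat μp μn (ε * k) - Complex.I * k) * u k‖ ^ 2
      ≤ (C * ε ^ α) ^ 2 * ((1 + (k : ℝ) ^ 2) ^ β * ‖u k‖ ^ 2) := by
    intro k
    have hx : (0:ℝ) < 1 + (k : ℝ) ^ 2 := by positivity
    have hA2 : ((1 + (k : ℝ) ^ 2) ^ ((1 + α) / 2)) ^ 2 = (1 + (k : ℝ) ^ 2) ^ (1 + α) := by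
      rw [← Real.rpow_natCast ((1 + (k : ℝ) ^ 2) ^ ((1 + α) / 2)) 2, ← Real.rpow_mul hx.le,
        show (1 + α) / 2 * (2:ℕ) = 1 + α by push_cast; ring]
    have hm2 : ‖((ε⁻¹ : ℝ) : ℂ) * muHat μp μn (ε * k) - Complex.I * k‖ ^ 2
        ≤ (C * ε ^ α) ^ 2 * (1 + (k : ℝ) ^ 2) ^ (1 + α) := by
      have := pow_le_pow_left₀ (norm_nonneg _) (hmult k) 2
      calc ‖((ε⁻¹ : ℝ) : ℂ) * muHat μp μn (ε * k) - Complex.I * k‖ ^ 2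
          ≤ (C * (ε ^ α * (1 + (k : ℝ) ^ 2) ^ ((1 + α) / 2))) ^ 2 := this
        _ = (C * ε ^ α) ^ 2 * (1 + (k : ℝ) ^ 2) ^ (1 + α) := by
            rw [← hA2]; ring
    rw [norm_mul, mul_pow]
    calc (1 + (k : ℝ) ^ 2) ^ (β - 1 - α) *
        (‖((ε⁻¹ : ℝ) : ℂ) * muHat μp μn (ε * k) - Complex.I * k‖ ^ 2 * ‖u k‖ ^ 2)
        ≤ (1 + (k : ℝ) ^ 2) ^ (β - 1 - α) *
          ((C * ε ^ α) ^ 2 * (1 + (k : ℝ) ^ 2) ^ (1 + α) * ‖u k‖ ^ 2) := by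
          refine mul_le_mul_of_nonneg_left ?_ (Real.rpow_nonneg hx.le _)
          exact mul_le_mul_of_nonneg_right hm2 (sq_nonneg _)
      _ = (C * ε ^ α) ^ 2 * ((1 + (k : ℝ) ^ 2) ^ (β - 1 - α) * (1 + (k : ℝ) ^ 2) ^ (1 + α)
            * ‖u k‖ ^ 2) := by ring
      _ = (C * ε ^ α) ^ 2 * ((1 + (k : ℝ) ^ 2) ^ β * ‖u k‖ ^ 2) := by
          rw [← Real.rpow_add hx, show β - 1 - α + (1 + α) = β by ring]
  have hsumR : Summable (fun k : ℤ => (C * ε ^ α) ^ 2 * ((1 + (k : ℝ) ^ 2) ^ β * ‖u k‖ ^ 2)) :=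
    hsum.mul_left _
  have hsumL : Summable (fun k : ℤ => (1 + (k : ℝ) ^ 2) ^ (β - 1 - α) *
      ‖(((ε⁻¹ : ℝ) : ℂ) * muHat μp μn (ε * k) - Complex.I * k) * u k‖ ^ 2) := by
    refine Summable.of_nonneg_of_le (fun k => by positivity) hterm hsumR
  refine ⟨hsumL, ?_⟩
  have htsum : sobNormSq (β - 1 - α)
      (fun k => (((ε⁻¹ : ℝ) : ℂ) * muHat μp μn (ε * k) - Complex.I * k) * u k)
      ≤ (C * ε ^ α) ^ 2 * sobNormSq β u := by
    rw [sobNormSq, sobNormSq, ← tsum_mul_left]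
    exact Summable.tsum_le_tsum hterm hsumL hsumR
  have hCε : 0 ≤ C * ε ^ α := by positivity
  calc Real.sqrt (sobNormSq (β - 1 - α)
        (fun k => (((ε⁻¹ : ℝ) : ℂ) * muHat μp μn (ε * k) - Complex.I * k) * u k))
      ≤ Real.sqrt ((C * ε ^ α) ^ 2 * sobNormSq β u) := Real.sqrt_le_sqrt htsum
    _ = C * ε ^ α * Real.sqrt (sobNormSq β u) := by
        rw [Real.sqrt_mul (sq_nonneg _), Real.sqrt_sq hCε]
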